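/- The lapse-Wick-rotated de Sitter embedding distance avoids the Legendre branch cut: let θ ∈ (0, π), H ≠ 0, d ≥ 1, and let (t, x), (t', x') ∈ ℝ × ℝ^d with (t, x) ≠ (t', x'). Define the complex number d_θ := cosh(H(t − t')) − (H²/2)·e^{2iθ}·e^{(t + t')H}·‖x − x'‖², where ‖·‖ is the Euclidean norm on ℝ^d. Then it is not the case that Im d_θ = 0 and Re d_θ ≤ 1; i.e., d_θ does not lie on the cut (−∞, 1] ⊂ ℝ ⊂ ℂ. -/
import Mathlib


open Complex

/-- The lapse-Wick-rotated de Sitter embedding distance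
`d_θ = cosh(H(t-t')) - (H²/2) e^{2iθ} e^{(t+t')H} ‖x-x'‖²` avoids the Legendre
branch cut `(-∞, 1] ⊂ ℝ ⊂ ℂ` for `θ ∈ (0, π)` at non-coincident points. -/
theorem deSitter_embedding_distance_avoids_cut (θ : ℝ) (hθ : θ ∈ Set.Ioo 0 Real.pi)
    (H : ℝ) (hH : H ≠ 0) (d : ℕ) (hd : 1 ≤ d)
    (t t' : ℝ) (x x' : EuclideanSpace ℝ (Fin d)) (hne : (t, x) ≠ (t', x')) :
    let dθ : ℂ := ((Real.cosh (H * (t - t')) : ℝ) : ℂ)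
      - ((H^2 / 2 : ℝ) : ℂ) * Complex.exp (2 * Complex.I * θ)
        * ((Real.exp ((t + t') * H) : ℝ) : ℂ) * ((‖x - x'‖^2 : ℝ) : ℂ)
    ¬(dθ.im = 0 ∧ dθ.re ≤ 1) := by
  intro dθ
  rintro ⟨h1, h2⟩
  have he : Complex.exp (2 * Complex.I * θ)
      = Complex.ofReal (Real.cos (2*θ)) + Complex.ofReal (Real.sin (2*θ)) * Complex.I := by
    rw [show (2 * Complex.I * (θ:ℂ)) = ((2*θ:ℝ):ℂ) * Complex.I by push_cast; ring,
      Complex.exp_mul_I, ← Complex.ofReal_cos, ← Complex.ofReal_sin]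
  set B : ℝ := H^2/2 with hB
  set C : ℝ := Real.exp ((t + t') * H) with hC
  set D : ℝ := ‖x - x'‖^2 with hD
  have him : dθ.im = -(B * Real.sin (2*θ) * C * D) := by
    simp only [dθ, he]
    simp only [Complex.sub_im, Complex.add_im, Complex.add_re, Complex.mul_im, Complex.mul_re,
      Complex.ofReal_re, Complex.ofReal_im, Complex.I_re, Complex.I_im]
    ring
  have hre : dθ.re = Real.cosh (H * (t - t')) - B * Real.cos (2*θ) * C * D := by
    simp only [dθ, he]
    simp only [Complex.sub_re, Complex.add_im, Complex.add_re, Complex.mul_im, Complex.mul_re,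
      Complex.ofReal_re, Complex.ofReal_im, Complex.I_re, Complex.I_im]
    ring
  have hBpos : 0 < B := by positivity
  have hCpos : 0 < C := Real.exp_pos _
  have hDnn : 0 ≤ D := by positivity
  rw [him, neg_eq_zero] at h1
  rcases eq_or_lt_of_le hDnn with hD0 | hDpos
  · -- x = x', so t ≠ t'
    have hx : x = x' := by
      have : ‖x - x'‖ = 0 := by
        have := hD0.symm
        nlinarith [norm_nonneg (x - x')]
      rwa [norm_eq_zero, sub_eq_zero] at this
    have ht : t ≠ t' := fun h => hne (by rw [h, hx])
    have : 1 < Real.cosh (H * (t - t')) := by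
      rw [Real.one_lt_cosh]
      intro h
      rcases mul_eq_zero.mp h with h | h
      · exact hH h
      · exact ht (sub_eq_zero.mp h)
    rw [hre, ← hD0] at h2
    simp at h2
    linarith
  · -- sin(2θ) = 0, so θ = π/2
    have hs : Real.sin (2*θ) = 0 := by
      rcases mul_eq_zero.mp h1 with h | h
      · rcases mul_eq_zero.mp h with h | h
        · rcases mul_eq_zero.mp h with h | h
          · exact absurd h hBpos.ne'
          · exact h
        · exact absurd h hCpos.ne'
      · exact absurd h hDpos.ne'
    obtain ⟨n, hn⟩ := Real.sin_eq_zero_iff.mp hs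
    have hθ1 := hθ.1
    have hθ2 := hθ.2
    have hπ := Real.pi_pos
    have hn1 : n = 1 := by
      have h1' : (0:ℝ) < n * Real.pi := by rw [hn]; linarith
      have h2' : (n:ℝ) * Real.pi < 2 * Real.pi := by rw [hn]; linarith
      have : (0:ℝ) < n := by
        by_contra h
        push_neg at h
        nlinarith [mul_pos (mul_pos hBpos hCpos) hDpos]
      have : (n:ℝ) < 2 := by nlinarith
      have h0 : (0:ℤ) < n := by exact_mod_cast ‹(0:ℝ) < (n:ℝ)›
      have h2'' : n < 2 := by exact_mod_cast ‹(n:ℝ) < 2›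
      omega
    have hc : Real.cos (2*θ) = -1 := by
      rw [← hn, hn1]
      simp
    rw [hre, hc] at h2
    have : 1 ≤ Real.cosh (H * (t - t')) := Real.one_le_cosh _
    nlinarith [mul_pos (mul_pos hBpos hCpos) hDpos]
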